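/- Let G be a finite group acting by algebra automorphisms on a commutative integral domain R over the complex numbers, and let S be a G-stable subalgebra of R such that for every non-identity element g of G there exists s in S with g·s ≠ s. Then the centralizer, in the skew group algebra R⋊G, of the subalgebra generated by S and the group elements G, equals the invariant subalgebra R^G (embedded as R^G·1). -/

import Mathlib

/-- Let a finite group `G` act by `ℂ`-algebra automorphisms on a commutative domain `R`, and
let `S` be a `G`-stable subalgebra of `R` separating the elements of `G` (for every `g ≠ 1`
there is `s ∈ S` with `g • s ≠ s`).  Let `A` be the skew group algebra `R ⋊ G`, presented by
an algebra map `ι : R → A`, a group of units `u : G → Aˣ` satisfying the skew commutation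
relation, such that every element of `A` is uniquely a finite sum `∑_w ι(f_w) · u_w`.  Then
the centralizer in `A` of the subalgebra generated by `ι(S)` and the group elements `u(G)`
is exactly `ι(R^G)`. -/
theorem skew_group_algebra_centralizer_eq_invariants
    (R : Type*) [CommRing R] [IsDomain R] [Algebra ℂ R]
    (G : Type*) [Group G] [Finite G]
    [MulSemiringAction G R] [SMulCommClass G ℂ R]
    (A : Type*) [Ring A] [Algebra ℂ A]
    (ι : R →ₐ[ℂ] A) (u : G →* Aˣ)
    (hcomm : ∀ (g : G) (r : R), (u g : A) * ι r = ι (g • r) * (u g : A))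
    (hbasis : ∀ a : A, ∃! f : G →₀ R, a = f.sum fun g r => ι r * (u g : A))
    (S : Subalgebra ℂ R)
    (hSstable : ∀ g : G, ∀ s ∈ S, g • s ∈ S)
    (hSsep : ∀ g : G, g ≠ 1 → ∃ s ∈ S, g • s ≠ s) :
    Set.centralizer ((ι '' (S : Set R)) ∪ Set.range fun g : G => (u g : A))
      = ι '' { r : R | ∀ g : G, g • r = r } := by
  set F : G → R → A := fun g r => ι r * (u g : A) with hFdef
  have hF0 : ∀ g : G, F g 0 = 0 := by intro g; simp [F]
  ext a
  simp only [Set.mem_centralizer_iff]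
  constructor
  · intro ha
    obtain ⟨f, hf, huniq⟩ := hbasis a
    -- key: commuting with ι s forces s * f g = f g * (g • s)
    have key : ∀ s ∈ S, ∀ g : G, s * f g = f g * (g • s) := by
      intro s hs g
      have hmem : ι s ∈ (ι '' (S : Set R)) ∪ Set.range fun g : G => (u g : A) :=
        Or.inl ⟨s, hs, rfl⟩
      let f₁ : G →₀ R := Finsupp.onFinset f.support (fun g => s * f g)
        (fun g h => Finsupp.mem_support_iff.2 (fun h0 => h (by simp [h0])))
      let f₂ : G →₀ R := Finsupp.onFinset f.support (fun g => f g * (g • s))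
        (fun g h => Finsupp.mem_support_iff.2 (fun h0 => h (by simp [h0])))
      obtain ⟨f', hf', huniq'⟩ := hbasis (ι s * a)
      have h1 : ι s * a = f₁.sum F := by
        rw [hf, Finsupp.sum, Finset.mul_sum, Finsupp.onFinset_sum _ hF0]
        refine Finset.sum_congr rfl fun g hg => ?_
        simp only [F, map_mul, mul_assoc]
      have h2 : ι s * a = f₂.sum F := by
        rw [ha _ hmem, hf, Finsupp.sum, Finset.sum_mul, Finsupp.onFinset_sum _ hF0]
        refine Finset.sum_congr rfl fun g hg => ?_
        simp only [F]
        rw [mul_assoc, hcomm, ← mul_assoc, ← map_mul]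
      have heq : f₁ = f₂ := (huniq' f₁ h1).trans (huniq' f₂ h2).symm
      exact DFunLike.congr_fun heq g
    -- support is contained in {1}
    have hsupp : ∀ g : G, g ≠ 1 → f g = 0 := by
      intro g hg
      by_contra h0
      obtain ⟨s, hs, hss⟩ := hSsep g hg
      have h1 : f g * (g • s - s) = 0 := by
        have := key s hs g
        rw [mul_sub]
        rw [mul_comm s (f g)] at this
        rw [← this, sub_self]
      rcases mul_eq_zero.1 h1 with h | h
      · exact h0 h
      · exact hss (sub_eq_zero.1 h)
    -- so a = ι (f 1)
    have hfsingle : f = Finsupp.single 1 (f 1) := by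
      ext g
      by_cases hg : g = 1
      · subst hg; simp
      · rw [Finsupp.single_eq_of_ne hg, hsupp g hg]
    have ha' : a = ι (f 1) := by
      rw [hf, hfsingle, Finsupp.sum_single_index (hF0 1)]
      simp [F]
    -- invariance of f 1
    refine ⟨f 1, fun w => ?_, ha'.symm⟩
    have hmem : (u w : A) ∈ (ι '' (S : Set R)) ∪ Set.range fun g : G => (u g : A) :=
      Or.inr ⟨w, rfl⟩
    have hcw : (u w : A) * a = a * (u w : A) := ha _ hmem
    rw [ha'] at hcw
    obtain ⟨f', hf', huniq'⟩ := hbasis (ι (f 1) * (u w : A))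
    have e1 : ι (f 1) * (u w : A) = (Finsupp.single w (f 1)).sum F := by
      rw [Finsupp.sum_single_index (hF0 w)]
    have e2 : ι (f 1) * (u w : A) = (Finsupp.single w (w • f 1)).sum F := by
      rw [Finsupp.sum_single_index (hF0 w)]
      show ι (f 1) * (u w : A) = ι (w • f 1) * (u w : A)
      rw [← hcomm, hcw]
    have heq : Finsupp.single w (f 1) = Finsupp.single w (w • f 1) :=
      (huniq' _ e1).trans (huniq' _ e2).symm
    have := DFunLike.congr_fun heq w
    simpa using this.symm
  · rintro ⟨r, hr, rfl⟩ m hm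
    rcases hm with ⟨s, hs, rfl⟩ | ⟨g, rfl⟩
    · rw [← map_mul, ← map_mul, mul_comm]
    · rw [hcomm, hr]
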